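/- Let A be a Banach algebra and I a closed two-sided ideal of A. If every derivation on the module extension Banach algebra T(A, A/I) is continuous, then every derivation δ : A → A satisfying δ(I) ⊆ I is continuous. -/

import Mathlib

variable {A : Type*} [NonUnitalNormedRing A] [NormedSpace ℂ A]
  [IsScalarTower ℂ A A] [SMulCommClass ℂ A A]

/-- The left action of `A` on the quotient Banach `A`-bimodule `A ⧸ I`:
`a · (b + I) = a*b + I`.  Here `I` is a two-sided ideal of `A` which is a `ℂ`-submodule. -/
def lact (I : Submodule ℂ A) (hIl : ∀ (a : A), ∀ x ∈ I, a * x ∈ I) (a : A) :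
    (A ⧸ I) →ₗ[ℂ] (A ⧸ I) :=
  Submodule.mapQ I I (LinearMap.mulLeft ℂ a) (fun x hx => hIl a x hx)

/-- The right action of `A` on the quotient Banach `A`-bimodule `A ⧸ I`:
`(b + I) · a = b*a + I`. -/
def ract (I : Submodule ℂ A) (hIr : ∀ (a : A), ∀ x ∈ I, x * a ∈ I) (a : A) :
    (A ⧸ I) →ₗ[ℂ] (A ⧸ I) :=
  Submodule.mapQ I I (LinearMap.mulRight ℂ a) (fun x hx => hIr a x hx)

/-- Multiplication of the module extension (trivial extension) Banach algebra
`T(A, A/I) = A × (A ⧸ I)`: `(a,u)(b,v) = (ab, a·v + u·b)`.  The ℓ¹-norm on the product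
induces the product topology. -/
def trivMulQ (I : Submodule ℂ A) (hIl : ∀ (a : A), ∀ x ∈ I, a * x ∈ I)
    (hIr : ∀ (a : A), ∀ x ∈ I, x * a ∈ I) (x y : A × (A ⧸ I)) : A × (A ⧸ I) :=
  (x.1 * y.1, lact I hIl x.1 y.2 + ract I hIr y.1 x.2)

theorem stmt10 [CompleteSpace A]
    (I : Submodule ℂ A)
    (hIl : ∀ (a : A), ∀ x ∈ I, a * x ∈ I) (hIr : ∀ (a : A), ∀ x ∈ I, x * a ∈ I)
    (hIc : IsClosed (I : Set A))
    -- every derivation on `T(A, A/I)` is continuous: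
    (hT : ∀ D : (A × (A ⧸ I)) →ₗ[ℂ] (A × (A ⧸ I)),
      (∀ x y : A × (A ⧸ I),
        D (trivMulQ I hIl hIr x y)
          = trivMulQ I hIl hIr x (D y) + trivMulQ I hIl hIr (D x) y) →
      Continuous D) :
    -- every derivation `δ : A → A` with `δ(I) ⊆ I` is continuous:
    ∀ δ : A →ₗ[ℂ] A,
      (∀ a b : A, δ (a * b) = a * δ b + δ a * b) → (∀ x ∈ I, δ x ∈ I) → Continuous δ := by
  intro δ hd hδI
  set δq : (A ⧸ I) →ₗ[ℂ] (A ⧸ I) := Submodule.mapQ I I δ hδI with hδq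
  set D : (A × (A ⧸ I)) →ₗ[ℂ] (A × (A ⧸ I)) := LinearMap.prodMap δ δq with hD
  have hder : ∀ x y : A × (A ⧸ I),
      D (trivMulQ I hIl hIr x y)
        = trivMulQ I hIl hIr x (D y) + trivMulQ I hIl hIr (D x) y := by
    rintro ⟨a, u⟩ ⟨b, v⟩
    obtain ⟨w, rfl⟩ := Submodule.Quotient.mk_surjective I u
    obtain ⟨z, rfl⟩ := Submodule.Quotient.mk_surjective I v
    refine Prod.ext ?_ ?_
    · simpa [hD, trivMulQ] using hd a b
    · simp only [hD, trivMulQ, lact, ract, LinearMap.prodMap_apply, Prod.snd_add,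
        map_add, Submodule.mapQ_apply, LinearMap.mulLeft_apply, LinearMap.mulRight_apply,
        hδq]
      change (Submodule.Quotient.mk (δ (a * z)) : A ⧸ I) + Submodule.Quotient.mk (δ (w * b))
        = (Submodule.Quotient.mk (a * δ z) : A ⧸ I) + Submodule.Quotient.mk (w * δ b)
          + ((Submodule.Quotient.mk (δ a * z) : A ⧸ I) + Submodule.Quotient.mk (δ w * b))
      simp only [← Submodule.Quotient.mk_add]
      congr 1
      rw [hd a z, hd w b]
      abel
  have hDc : Continuous D := hT D hder
  have : Continuous fun a : A => (D (a, (0 : A ⧸ I))).1 :=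
    continuous_fst.comp (hDc.comp (continuous_id.prodMk continuous_const))
  simpa [hD] using this
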